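/- Let Ĝ and G be finite groups and π : Ĝ → G a surjective homomorphism whose kernel is a characteristic subgroup of Ĝ; let ζ : MulAut Ĝ → MulAut G be the unique homomorphism with ζ(ψ) ∘ π = π ∘ ψ for all ψ. Let r̂ : Fin m̂ → FreeGroup (Fin n) be a presentation P̂ of Ĝ with presentation n-tuple â, and r : Fin m → FreeGroup (Fin n) a presentation P of G such that π ∘ â is a presentation n-tuple of P. Then: (a) for every presentation n-tuple b̂ of P̂, the tuple π ∘ b̂ is a presentation n-tuple of P; and (b) Nat.card (ker ζ) = Nat.card {b̂ : Fin n → Ĝ | b̂ is a presentation n-tuple of P̂ and π ∘ b̂ = π ∘ â}. -/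
import Mathlib


theorem stmt_3_aux {F Ghat : Type*} [Group F] [Group Ghat] [Finite Ghat]
    (f g : F →* Ghat) (hf : Function.Surjective f) (hg : Function.Surjective g)
    (h : f.ker ≤ g.ker) :
    (∃ ψ : MulAut Ghat, ∀ w, ψ (f w) = g w) ∧ g.ker = f.ker := by
  obtain ⟨finv, hfinv⟩ := hf.hasRightInverse
  set φ := f.liftOfRightInverse finv hfinv ⟨g, fun x hx => h hx⟩ with hφdef
  have hφ : ∀ w, φ (f w) = g w := fun w =>
    f.liftOfRightInverse_comp_apply finv hfinv _ w
  have hsurj : Function.Surjective φ := by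
    intro y
    obtain ⟨w, hw⟩ := hg y
    exact ⟨f w, by rw [hφ, hw]⟩
  have hinj : Function.Injective φ := Finite.injective_iff_surjective.mpr hsurj
  refine ⟨⟨MulEquiv.ofBijective φ ⟨hinj, hsurj⟩, hφ⟩, le_antisymm (fun x hx => ?_) h⟩
  have : φ (f x) = φ 1 := by
    rw [hφ, map_one]; exact hx
  exact hinj this


/-- Theorem `sizeker` (a) and (b): for a covering `π : Ĝ → G` with
characteristic kernel, images under `π` of presentation tuples of `P̂` are presentation
tuples of `P`, and `|Ker ζ| = |{b̂ ∈ S_P̂ ∣ π ∘ b̂ = π ∘ â}|`. -/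
theorem stmt_3 {Ghat G : Type*} [Group Ghat] [Group G] [Finite Ghat] [Finite G]
    (π : Ghat →* G) (hπ : Function.Surjective π) (hchar : π.ker.Characteristic)
    (ζ : MulAut Ghat →* MulAut G)
    (hζ : ∀ (ψ : MulAut Ghat) (g : Ghat), ζ ψ (π g) = π (ψ g))
    {n mhat m : ℕ} (rhat : Fin mhat → FreeGroup (Fin n)) (r : Fin m → FreeGroup (Fin n))
    (hPhat : ∃ f : FreeGroup (Fin n) →* Ghat, Function.Surjective f ∧
      f.ker = Subgroup.normalClosure (Set.range rhat))
    (hP : ∃ f : FreeGroup (Fin n) →* G, Function.Surjective f ∧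
      f.ker = Subgroup.normalClosure (Set.range r))
    (ahat : Fin n → Ghat)
    (hahat : Function.Surjective (FreeGroup.lift ahat) ∧
      ∀ k, FreeGroup.lift ahat (rhat k) = 1)
    (hπahat : Function.Surjective (FreeGroup.lift (π ∘ ahat)) ∧
      ∀ k, FreeGroup.lift (π ∘ ahat) (r k) = 1) :
    (∀ bhat : Fin n → Ghat,
      (Function.Surjective (FreeGroup.lift bhat) ∧ ∀ k, FreeGroup.lift bhat (rhat k) = 1) →
      (Function.Surjective (FreeGroup.lift (π ∘ bhat)) ∧
        ∀ k, FreeGroup.lift (π ∘ bhat) (r k) = 1)) ∧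
    Nat.card ζ.ker =
      Nat.card {bhat : Fin n → Ghat //
        (Function.Surjective (FreeGroup.lift bhat) ∧ ∀ k, FreeGroup.lift bhat (rhat k) = 1) ∧
        π ∘ bhat = π ∘ ahat} := by
  obtain ⟨f, hfsurj, hfker⟩ := hPhat
  -- lift of π ∘ c is π composed with lift of c
  have hcomp : ∀ c : Fin n → Ghat, ∀ w,
      FreeGroup.lift (π ∘ c) w = π (FreeGroup.lift c w) := by
    intro c
    have : FreeGroup.lift (π ∘ c) = π.comp (FreeGroup.lift c) := by
      ext x; simp
    intro w; rw [this]; rfl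
  -- normal closure of relators is inside the kernel of lift of any presentation tuple
  have hNle : ∀ c : Fin n → Ghat, (∀ k, FreeGroup.lift c (rhat k) = 1) →
      Subgroup.normalClosure (Set.range rhat) ≤ (FreeGroup.lift c).ker := by
    intro c hc
    apply Subgroup.normalClosure_le_normal
    rintro _ ⟨k, rfl⟩
    exact hc k
  -- kernel of lift ahat equals the normal closure
  have hkera : (FreeGroup.lift ahat).ker = Subgroup.normalClosure (Set.range rhat) := by
    have := (stmt_3_aux f (FreeGroup.lift ahat) hfsurj hahat.1
      (by rw [hfker]; exact hNle ahat hahat.2)).2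
    rw [this, hfker]
  -- for any presentation tuple bhat, get automorphism ψ with ψ ∘ lift ahat = lift bhat
  have key : ∀ bhat : Fin n → Ghat,
      (Function.Surjective (FreeGroup.lift bhat) ∧ ∀ k, FreeGroup.lift bhat (rhat k) = 1) →
      ∃ ψ : MulAut Ghat, ∀ w, ψ (FreeGroup.lift ahat w) = FreeGroup.lift bhat w := by
    intro bhat hb
    exact (stmt_3_aux (FreeGroup.lift ahat) (FreeGroup.lift bhat) hahat.1 hb.1
      (by rw [hkera]; exact hNle bhat hb.2)).1
  -- characteristic kernel: automorphisms preserve ker π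
  have hker_pres : ∀ (ψ : MulAut Ghat) (x : Ghat), π x = 1 → π (ψ x) = 1 := by
    intro ψ x hx
    have hfix : π.ker.comap ψ.toMonoidHom = π.ker := hchar.fixed ψ
    have : x ∈ π.ker.comap ψ.toMonoidHom := by rw [hfix]; exact hx
    exact this
  -- part (a)
  have parta : ∀ bhat : Fin n → Ghat,
      (Function.Surjective (FreeGroup.lift bhat) ∧ ∀ k, FreeGroup.lift bhat (rhat k) = 1) →
      (Function.Surjective (FreeGroup.lift (π ∘ bhat)) ∧
        ∀ k, FreeGroup.lift (π ∘ bhat) (r k) = 1) := by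
    intro bhat hb
    obtain ⟨ψ, hψ⟩ := key bhat hb
    constructor
    · intro y
      obtain ⟨ghat, hg⟩ := hπ y
      obtain ⟨w, hw⟩ := hb.1 ghat
      exact ⟨w, by rw [hcomp, hw, hg]⟩
    · intro k
      rw [hcomp, ← hψ]
      apply hker_pres
      rw [← hcomp]
      exact hπahat.2 k
  refine ⟨parta, ?_⟩
  -- part (b): explicit bijection from ker ζ to the set of tuples
  have hpres : ∀ ψ : MulAut Ghat, ∀ w : FreeGroup (Fin n),
      FreeGroup.lift (ψ ∘ ahat) w = ψ (FreeGroup.lift ahat w) := by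
    intro ψ
    have : FreeGroup.lift (⇑ψ ∘ ahat) = ψ.toMonoidHom.comp (FreeGroup.lift ahat) := by
      ext x; simp
    intro w; rw [this]; rfl
  have Φdef : ∀ ψ : ζ.ker,
      ((Function.Surjective (FreeGroup.lift ((ψ : MulAut Ghat) ∘ ahat)) ∧
        ∀ k, FreeGroup.lift ((ψ : MulAut Ghat) ∘ ahat) (rhat k) = 1) ∧
        π ∘ ((ψ : MulAut Ghat) ∘ ahat) = π ∘ ahat) := by
    rintro ⟨ψ, hψ⟩
    have hζψ : ζ ψ = 1 := hψ
    refine ⟨⟨?_, ?_⟩, ?_⟩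
    · intro y
      obtain ⟨w, hw⟩ := hahat.1 (ψ.symm y)
      exact ⟨w, by rw [hpres, hw]; simp⟩
    · intro k
      rw [hpres, hahat.2 k, map_one]
    · funext j
      have : π (ψ (ahat j)) = ζ ψ (π (ahat j)) := (hζ ψ (ahat j)).symm
      simp only [Function.comp_apply]
      rw [this, hζψ]
      rfl
  let Φ : ζ.ker → {bhat : Fin n → Ghat //
      (Function.Surjective (FreeGroup.lift bhat) ∧ ∀ k, FreeGroup.lift bhat (rhat k) = 1) ∧
      π ∘ bhat = π ∘ ahat} := fun ψ => ⟨(ψ : MulAut Ghat) ∘ ahat, Φdef ψ⟩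
  apply Nat.card_eq_of_bijective Φ
  constructor
  · rintro ⟨ψ, hψ⟩ ⟨ψ', hψ'⟩ h
    have heq : (ψ : MulAut Ghat) ∘ ahat = (ψ' : MulAut Ghat) ∘ ahat := congrArg Subtype.val h
    apply Subtype.ext
    apply MulEquiv.ext
    intro g
    obtain ⟨w, rfl⟩ := hahat.1 g
    rw [← hpres, ← hpres, heq]
  · rintro ⟨bhat, hb, hbeq⟩
    obtain ⟨ψ, hψ⟩ := key bhat hb
    have hliftπ : FreeGroup.lift (π ∘ bhat) = FreeGroup.lift (π ∘ ahat) := by rw [hbeq]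
    have hψker : ψ ∈ ζ.ker := by
      have : ζ ψ = 1 := by
        apply MulEquiv.ext
        intro x
        obtain ⟨g, rfl⟩ := hπ x
        obtain ⟨w, rfl⟩ := hahat.1 g
        have h1 : ζ ψ (π (FreeGroup.lift ahat w)) = π (ψ (FreeGroup.lift ahat w)) := hζ _ _
        rw [h1, hψ, ← hcomp, hliftπ, hcomp]
        rfl
      exact this
    refine ⟨⟨ψ, hψker⟩, ?_⟩
    apply Subtype.ext
    funext j
    show ψ (ahat j) = bhat j
    have := hψ (FreeGroup.of j)
    simpa using this
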